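/- Invariance of the Lebesgue decomposition parts (established within the proof of Lemma 1.3). Let E be a measurable space, m a σ-finite measure on E, and κ : Kernel E E a Markov kernel such that for every finite measure μ on E with μ ≪ m one has μ.bind κ ≪ m. If μ* is a finite measure on E with μ*.bind κ = μ*, then both parts of the Lebesgue decomposition of μ* with respect to m are invariant: (m.withDensity (μ*.rnDeriv m)).bind κ = m.withDensity (μ*.rnDeriv m) and (μ*.singularPart m).bind κ = μ*.singularPart m. -/

import Mathlib

open MeasureTheory ENNReal ProbabilityTheory

/-- Invariance of the two parts of the Lebesgue decomposition of an invariant measure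
(established within the proof of Lemma 1.3): if a Markov kernel preserves absolute continuity
w.r.t. a σ-finite measure `m` and `μ*` is a finite invariant measure, then the absolutely
continuous part `m.withDensity (μ*.rnDeriv m)` and the singular part `μ*.singularPart m`
are both invariant. -/
theorem lebesgue_parts_invariant
    {E : Type*} [MeasurableSpace E] (m : Measure E) [SigmaFinite m]
    (κ : Kernel E E) [IsMarkovKernel κ]
    (hpres : ∀ μ : Measure E, IsFiniteMeasure μ → μ ≪ m → μ.bind ⇑κ ≪ m)
    (μs : Measure E) [IsFiniteMeasure μs]
    (hinv : μs.bind ⇑κ = μs) :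
    (m.withDensity (μs.rnDeriv m)).bind ⇑κ = m.withDensity (μs.rnDeriv m) ∧
    (μs.singularPart m).bind ⇑κ = μs.singularPart m := by
  set a := m.withDensity (μs.rnDeriv m) with ha
  set s := μs.singularPart m with hs
  have hadd : a + s = μs := Measure.rnDeriv_add_singularPart μs m
  -- bind of finite measure by Markov kernel is finite and has same total mass
  have hmass : ∀ ν : Measure E, (ν.bind ⇑κ) Set.univ = ν Set.univ := by
    intro ν
    rw [Measure.bind_apply MeasurableSet.univ (Kernel.measurable κ).aemeasurable]
    simp
  have hfin : ∀ ν : Measure E, IsFiniteMeasure ν → IsFiniteMeasure (ν.bind ⇑κ) := by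
    intro ν hν
    exact ⟨by rw [hmass ν]; exact measure_lt_top ν _⟩
  haveI : IsFiniteMeasure (a.bind ⇑κ) := hfin a inferInstance
  haveI : IsFiniteMeasure (s.bind ⇑κ) := hfin s inferInstance
  have key : a.bind ⇑κ + s.bind ⇑κ = μs := by
    rw [← (show ∀ μ ν : Measure E, (μ + ν).bind ⇑κ = μ.bind ⇑κ + ν.bind ⇑κ from fun μ ν => by ext t ht; simp only [Measure.coe_add, Pi.add_apply, Measure.bind_apply ht (Kernel.measurable κ).aemeasurable, lintegral_add_measure]), hadd, hinv]
  have hac : a.bind ⇑κ ≪ m :=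
    hpres a inferInstance (withDensity_absolutelyContinuous m _)
  -- singular parts
  have h1 : (a.bind ⇑κ).singularPart m + (s.bind ⇑κ).singularPart m = s := by
    rw [← Measure.singularPart_add, key]
  rw [Measure.singularPart_eq_zero_of_ac hac, zero_add] at h1
  -- s.bind κ = its singular part since the ac part has zero mass
  have hdec : (s.bind ⇑κ).singularPart m + m.withDensity ((s.bind ⇑κ).rnDeriv m) = s.bind ⇑κ :=
    Measure.singularPart_add_rnDeriv _ m
  have hzero : m.withDensity ((s.bind ⇑κ).rnDeriv m) = 0 := by
    have := congrArg (fun ν : Measure E => ν Set.univ) hdec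
    simp only [Measure.coe_add, Pi.add_apply] at this
    rw [h1, hmass s] at this
    have h2 : m.withDensity ((s.bind ⇑κ).rnDeriv m) Set.univ = 0 := by
      have hfin' : s Set.univ ≠ ∞ := measure_ne_top s _
      exact (ENNReal.add_right_inj hfin').mp (by rw [add_zero]; exact this.symm) |>.symm
    exact Measure.measure_univ_eq_zero.mp h2
  have hsbind : s.bind ⇑κ = s := by
    rw [← hdec, hzero, add_zero, h1]
  have habind : a.bind ⇑κ = a := by
    have : a.bind ⇑κ + s = a + s := by
      conv_lhs => rw [← hsbind]
      rw [key, hadd]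
    ext t ht
    have ht' := congrArg (fun ν : Measure E => ν t) this
    simp only [Measure.coe_add, Pi.add_apply] at ht'
    exact (ENNReal.add_left_inj (measure_ne_top s t)).mp ht'
  exact ⟨habind, hsbind⟩
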